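/- With the notation of the previous statements (α > 1, 0 ≤ Λ < Γ(α), K = K₁ + K₂), for all t,s ≥ 0 we have 0 ≤ K(t,s) ≤ t^(α-1)/(Γ(α)-Λ) and 0 ≤ K(t,s)/(1+t^(α-1)) ≤ 1/(Γ(α)-Λ). -/
import Mathlib


open Real MeasureTheory Set Filter

noncomputable def K1 (α : ℝ) (t s : ℝ) : ℝ :=
  if s ≤ t then (t ^ (α - 1) - (t - s) ^ (α - 1)) / Real.Gamma α
  else t ^ (α - 1) / Real.Gamma α

lemma K1_bounds (α : ℝ) (hα : 1 < α) (t s : ℝ) (ht : 0 ≤ t) (hs : 0 ≤ s) :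
    0 ≤ K1 α t s ∧ K1 α t s ≤ t ^ (α - 1) / Real.Gamma α := by
  have hG : 0 < Real.Gamma α := Real.Gamma_pos_of_pos (by linarith)
  have htp : 0 ≤ t ^ (α - 1) := Real.rpow_nonneg ht _
  unfold K1
  split_ifs with hst
  · have h1 : 0 ≤ t - s := by linarith
    have h2 : (t - s) ^ (α - 1) ≤ t ^ (α - 1) :=
      Real.rpow_le_rpow h1 (by linarith) (by linarith)
    have h3 : 0 ≤ (t - s) ^ (α - 1) := Real.rpow_nonneg h1 _
    constructor
    · exact div_nonneg (by linarith) hG.le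
    · exact div_le_div_of_nonneg_right (by linarith) hG.le
  · exact ⟨div_nonneg htp hG.le, le_refl _⟩

theorem stmt2 (α : ℝ) (hα : 1 < α) (h : ℝ → ℝ) (hh : ∀ t, 0 ≤ h t)
    (hint : IntegrableOn (fun t => h t * t ^ (α - 1)) (Ioi 0))
    (Λ : ℝ) (hΛ : Λ = ∫ t in Ioi (0:ℝ), h t * t ^ (α - 1))
    (hΛ0 : 0 ≤ Λ) (hΛlt : Λ < Real.Gamma α)
    (K2 K : ℝ → ℝ → ℝ)
    (hK2 : ∀ t s, K2 t s =
      t ^ (α - 1) / (Real.Gamma α - Λ) * ∫ τ in Ioi (0:ℝ), h τ * K1 α τ s)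
    (hK : ∀ t s, K t s = K1 α t s + K2 t s) :
    ∀ t s : ℝ, 0 ≤ t → 0 ≤ s →
      (0 ≤ K t s ∧ K t s ≤ t ^ (α - 1) / (Real.Gamma α - Λ)) ∧
      (0 ≤ K t s / (1 + t ^ (α - 1)) ∧
        K t s / (1 + t ^ (α - 1)) ≤ 1 / (Real.Gamma α - Λ)) := by
  intro t s ht hs
  have hG : 0 < Real.Gamma α := Real.Gamma_pos_of_pos (by linarith)
  have hGΛ : 0 < Real.Gamma α - Λ := by linarith
  have htp : 0 ≤ t ^ (α - 1) := Real.rpow_nonneg ht _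
  -- bounds on the integral
  set I : ℝ := ∫ τ in Ioi (0:ℝ), h τ * K1 α τ s with hI
  have hI0 : 0 ≤ I := by
    apply setIntegral_nonneg measurableSet_Ioi
    intro τ hτ
    exact mul_nonneg (hh τ) (K1_bounds α hα τ s (le_of_lt hτ) hs).1
  have hIle : I ≤ Λ / Real.Gamma α := by
    have hg : IntegrableOn (fun τ => h τ * τ ^ (α - 1) / Real.Gamma α) (Ioi 0) :=
      hint.div_const _
    have hmono : ∀ᵐ τ ∂(volume.restrict (Ioi (0:ℝ))),
        h τ * K1 α τ s ≤ h τ * τ ^ (α - 1) / Real.Gamma α := by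
      refine (ae_restrict_iff' measurableSet_Ioi).2 (ae_of_all _ ?_)
      intro τ hτ
      rw [mul_div_assoc]
      exact mul_le_mul_of_nonneg_left (K1_bounds α hα τ s (le_of_lt hτ) hs).2 (hh τ)
    have hnn : ∀ᵐ τ ∂(volume.restrict (Ioi (0:ℝ))),
        0 ≤ h τ * K1 α τ s := by
      refine (ae_restrict_iff' measurableSet_Ioi).2 (ae_of_all _ ?_)
      intro τ hτ
      exact mul_nonneg (hh τ) (K1_bounds α hα τ s (le_of_lt hτ) hs).1
    calc I ≤ ∫ τ in Ioi (0:ℝ), h τ * τ ^ (α - 1) / Real.Gamma α :=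
          integral_mono_of_nonneg hnn hg hmono
      _ = Λ / Real.Gamma α := by rw [integral_div, ← hΛ]
  have hK1b := K1_bounds α hα t s ht hs
  have hK2nn : 0 ≤ K2 t s := by
    rw [hK2]
    exact mul_nonneg (div_nonneg htp hGΛ.le) hI0
  have hKnn : 0 ≤ K t s := by rw [hK]; exact add_nonneg hK1b.1 hK2nn
  have hKle : K t s ≤ t ^ (α - 1) / (Real.Gamma α - Λ) := by
    rw [hK, hK2]
    have h2 : t ^ (α - 1) / (Real.Gamma α - Λ) * I ≤
        t ^ (α - 1) / (Real.Gamma α - Λ) * (Λ / Real.Gamma α) :=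
      mul_le_mul_of_nonneg_left hIle (div_nonneg htp hGΛ.le)
    have heq : t ^ (α - 1) / Real.Gamma α +
        t ^ (α - 1) / (Real.Gamma α - Λ) * (Λ / Real.Gamma α) =
        t ^ (α - 1) / (Real.Gamma α - Λ) := by
      field_simp
      ring
    calc K1 α t s + t ^ (α - 1) / (Real.Gamma α - Λ) * I
        ≤ t ^ (α - 1) / Real.Gamma α +
          t ^ (α - 1) / (Real.Gamma α - Λ) * (Λ / Real.Gamma α) := by
          exact add_le_add hK1b.2 h2
      _ = t ^ (α - 1) / (Real.Gamma α - Λ) := heq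
  have hD : (0:ℝ) < 1 + t ^ (α - 1) := by linarith
  refine ⟨⟨hKnn, hKle⟩, ⟨div_nonneg hKnn hD.le, ?_⟩⟩
  rw [div_le_div_iff₀ hD hGΛ]
  have hKle' : K t s * (Real.Gamma α - Λ) ≤ t ^ (α - 1) :=
    (le_div_iff₀ hGΛ).1 hKle
  linarith
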